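/- Every internal triangle in ℤ² consists of its three vertices and its centroid; that is, if T = {a, b, c, d} is an internal triangle with vertices a, b, c and interior point d, then 3d = a + b + c. -/

import Mathlib

/-- Embed a lattice point into the plane. -/
def toR (p : ℤ × ℤ) : ℝ × ℝ := ((p.1 : ℝ), (p.2 : ℝ))

/-- Determinant of the 2×2 matrix with columns `u`, `v`. -/
def det2 (u v : ℤ × ℤ) : ℤ := u.1 * v.2 - u.2 * v.1

/-- The set of lattice points in the (closed) triangle with vertices `a b c`. -/
def triPts (a b c : ℤ × ℤ) : Set (ℤ × ℤ) :=
  {p | toR p ∈ convexHull ℝ {toR a, toR b, toR c}}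

/-- A border triangle: a lattice triangle with exactly 4 lattice points, whose
fourth point lies on the boundary (not in the interior). -/
def IsBorderTri (T : Set (ℤ × ℤ)) : Prop :=
  ∃ a b c d : ℤ × ℤ, det2 (b - a) (c - a) ≠ 0 ∧
    T = triPts a b c ∧ T = {a, b, c, d} ∧ T.ncard = 4 ∧
    toR d ∉ interior (convexHull ℝ {toR a, toR b, toR c})

/-- An internal triangle: a lattice triangle with exactly 4 lattice points, whose
fourth point lies in the interior. -/
def IsInternalTri (T : Set (ℤ × ℤ)) : Prop :=
  ∃ a b c d : ℤ × ℤ, det2 (b - a) (c - a) ≠ 0 ∧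
    T = triPts a b c ∧ T = {a, b, c, d} ∧ T.ncard = 4 ∧
    toR d ∈ interior (convexHull ℝ {toR a, toR b, toR c})

/-- `S` is B-stable: no border triangle has exactly three of its points in `S`. -/
def BStable (S : Set (ℤ × ℤ)) : Prop :=
  ∀ T, IsBorderTri T → (T ∩ S).ncard ≠ 3

/-- `S` is I-stable: no internal triangle has exactly three of its points in `S`. -/
def IStable (S : Set (ℤ × ℤ)) : Prop :=
  ∀ T, IsInternalTri T → (T ∩ S).ncard ≠ 3

/-- Upper density of a subset of `ℤ²`. -/
noncomputable def upperDensity (S : Set (ℤ × ℤ)) : ℝ :=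
  Filter.limsup (fun n : ℕ =>
    ((S ∩ Set.Icc (-(n : ℤ), -(n : ℤ)) ((n : ℤ), (n : ℤ))).ncard : ℝ) /
      (2 * (n : ℝ) + 1) ^ 2) Filter.atTop

lemma tri_rot {α : Type*} (A B C : α) : ({A, B, C} : Set α) = {B, C, A} := by
  ext p; simp only [Set.mem_insert_iff, Set.mem_singleton_iff]; tauto

lemma combo_mem (A B C : ℝ × ℝ) (c0 c1 c2 : ℝ) (h0 : 0 ≤ c0) (h1 : 0 ≤ c1)
    (h2 : 0 ≤ c2) (hs : c0 + c1 + c2 = 1) :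
    c0 • A + c1 • B + c2 • C ∈ convexHull ℝ ({A, B, C} : Set (ℝ × ℝ)) := by
  have hA : A ∈ convexHull ℝ ({A, B, C} : Set (ℝ × ℝ)) :=
    subset_convexHull ℝ _ (by simp)
  have hB : B ∈ convexHull ℝ ({A, B, C} : Set (ℝ × ℝ)) :=
    subset_convexHull ℝ _ (by simp)
  have hC : C ∈ convexHull ℝ ({A, B, C} : Set (ℝ × ℝ)) :=
    subset_convexHull ℝ _ (by simp)
  have hcon := convex_convexHull ℝ ({A, B, C} : Set (ℝ × ℝ))
  rcases eq_or_lt_of_le (add_nonneg h1 h2) with h | h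
  · have hc1 : c1 = 0 := by linarith
    have hc2 : c2 = 0 := by linarith
    have hc0 : c0 = 1 := by linarith
    simp [hc0, hc1, hc2]
    exact hA
  · set t := c1 + c2 with ht
    have hy : (c1 / t) • B + (c2 / t) • C ∈ convexHull ℝ ({A, B, C} : Set (ℝ × ℝ)) :=
      hcon hB hC (by positivity) (by positivity) (by field_simp; exact ht.symm)
    have := hcon hA hy h0 (le_of_lt h) (by linarith)
    convert this using 1
    rw [smul_add, smul_smul, smul_smul]
    rw [mul_div_cancel₀ _ (by linarith : t ≠ 0), mul_div_cancel₀ _ (by linarith : t ≠ 0)]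
    rw [add_assoc]

lemma hull_halfplane (A B C : ℝ × ℝ) (σ : ℝ)
    (hA : 0 ≤ σ * ((B.1 - A.1) * (C.2 - A.2) - (B.2 - A.2) * (C.1 - A.1))) :
    ∀ x ∈ convexHull ℝ ({A, B, C} : Set (ℝ × ℝ)),
      0 ≤ σ * ((B.1 - x.1) * (C.2 - x.2) - (B.2 - x.2) * (C.1 - x.1)) := by
  intro x hx
  have hsub : convexHull ℝ ({A, B, C} : Set (ℝ × ℝ)) ⊆
      {y : ℝ × ℝ | 0 ≤ σ * ((B.1 - y.1) * (C.2 - y.2) - (B.2 - y.2) * (C.1 - y.1))} := by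
    apply convexHull_min
    · intro y hy
      simp only [Set.mem_insert_iff, Set.mem_singleton_iff] at hy
      rcases hy with rfl | rfl | rfl
      · exact hA
      · simp only [Set.mem_setOf_eq]; ring_nf; nlinarith [sq_nonneg (0:ℝ)]
      · simp only [Set.mem_setOf_eq]; ring_nf; nlinarith [sq_nonneg (0:ℝ)]
    · intro y hy z hz α β hα hβ hs
      simp only [Set.mem_setOf_eq] at *
      have h1 : (α • y + β • z).1 = α * y.1 + β * z.1 := by
        simp [Prod.fst_add, Prod.smul_fst, smul_eq_mul]
      have h2 : (α • y + β • z).2 = α * y.2 + β * z.2 := by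
        simp [Prod.snd_add, Prod.smul_snd, smul_eq_mul]
      rw [h1, h2]
      have key : σ * ((B.1 - (α * y.1 + β * z.1)) * (C.2 - (α * y.2 + β * z.2)) -
          (B.2 - (α * y.2 + β * z.2)) * (C.1 - (α * y.1 + β * z.1))) =
          α * (σ * ((B.1 - y.1) * (C.2 - y.2) - (B.2 - y.2) * (C.1 - y.1))) +
          β * (σ * ((B.1 - z.1) * (C.2 - z.2) - (B.2 - z.2) * (C.1 - z.1))) := by
        have hβ' : β = 1 - α := by linarith
        subst hβ'
        ring
      rw [key]
      have := mul_nonneg hα hy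
      have := mul_nonneg hβ hz
      linarith
  exact hsub hx

lemma interior_pos (A B C : ℝ × ℝ) (σ : ℝ) (hσ : σ * σ = 1)
    (hA : 0 < σ * ((B.1 - A.1) * (C.2 - A.2) - (B.2 - A.2) * (C.1 - A.1)))
    (x : ℝ × ℝ) (hx : x ∈ interior (convexHull ℝ ({A, B, C} : Set (ℝ × ℝ)))) :
    0 < σ * ((B.1 - x.1) * (C.2 - x.2) - (B.2 - x.2) * (C.1 - x.1)) := by
  have hge := hull_halfplane A B C σ (le_of_lt hA) x (interior_subset hx)
  rcases lt_or_eq_of_le hge with h | h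
  · exact h
  -- f x = 0 ; move in decreasing direction
  exfalso
  -- gradient direction
  set g1 : ℝ := σ * (C.2 - B.2) with hg1
  set g2 : ℝ := σ * (B.1 - C.1) with hg2
  have hgn : (B.2 - C.2)^2 + (B.1 - C.1)^2 > 0 := by
    rcases eq_or_ne B C with rfl | hne
    · exfalso; nlinarith
    · have : B.1 ≠ C.1 ∨ B.2 ≠ C.2 := by
        by_contra hc; push_neg at hc
        exact hne (Prod.ext hc.1 hc.2)
      rcases this with h' | h'
      · have h'' : (B.1 - C.1) ≠ 0 := sub_ne_zero.2 h'
        have : (B.1 - C.1)^2 > 0 := by positivity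
        nlinarith [sq_nonneg (B.2 - C.2)]
      · have h'' : (B.2 - C.2) ≠ 0 := sub_ne_zero.2 h'
        have : (B.2 - C.2)^2 > 0 := by positivity
        nlinarith [sq_nonneg (B.1 - C.1)]
  obtain ⟨ε, hε, hball⟩ := Metric.mem_nhds_iff.1 (mem_interior_iff_mem_nhds.1 hx)
  set t : ℝ := ε / (|g1| + |g2| + 1) with htdef
  have ht : 0 < t := by positivity
  set x' : ℝ × ℝ := (x.1 + t * g1, x.2 + t * g2) with hx'
  have hx'mem : x' ∈ convexHull ℝ ({A, B, C} : Set (ℝ × ℝ)) := by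
    apply hball
    simp only [Metric.mem_ball, Prod.dist_eq, hx']
    have d1 : dist (x.1 + t * g1) x.1 = t * |g1| := by
      rw [Real.dist_eq]
      have : x.1 + t * g1 - x.1 = t * g1 := by ring
      rw [this, abs_mul, abs_of_pos ht]
    have d2 : dist (x.2 + t * g2) x.2 = t * |g2| := by
      rw [Real.dist_eq]
      have h22 : x.2 + t * g2 - x.2 = t * g2 := by ring
      rw [h22, abs_mul, abs_of_pos ht]
    rw [d1, d2]
    have h1 : t * |g1| < ε := by
      rw [htdef]
      rw [div_mul_eq_mul_div, div_lt_iff₀ (by positivity)]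
      nlinarith [abs_nonneg g1, abs_nonneg g2]
    have h2 : t * |g2| < ε := by
      rw [htdef]
      rw [div_mul_eq_mul_div, div_lt_iff₀ (by positivity)]
      nlinarith [abs_nonneg g1, abs_nonneg g2]
    exact max_lt h1 h2
  have hval := hull_halfplane A B C σ (le_of_lt hA) x' hx'mem
  have hcomp : σ * ((B.1 - x'.1) * (C.2 - x'.2) - (B.2 - x'.2) * (C.1 - x'.1)) =
      σ * ((B.1 - x.1) * (C.2 - x.2) - (B.2 - x.2) * (C.1 - x.1))
      - t * (σ * σ) * ((B.2 - C.2)^2 + (B.1 - C.1)^2) + t^2 * (g1 * g2 - g2 * g1) := by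
    simp only [hx', hg1, hg2]; ring
  rw [hcomp, ← h, hσ] at hval
  nlinarith

lemma descent (x y z : ℤ × ℤ) (hk : 2 ≤ |det2 (y - x) (z - x)|) :
    ∃ p : ℤ × ℤ, p ≠ x ∧ p ≠ y ∧ p ≠ z ∧
      toR p ∈ convexHull ℝ ({toR x, toR y, toR z} : Set (ℝ × ℝ)) := by
  set u := y - x with hu
  set v := z - x with hv
  set k := det2 u v with hkdef
  have hu1 : u.1 = y.1 - x.1 := rfl
  have hu2 : u.2 = y.2 - x.2 := rfl
  have hv1 : v.1 = z.1 - x.1 := rfl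
  have hv2 : v.2 = z.2 - x.2 := rfl
  have hk0 : k ≠ 0 := by intro h; rw [h] at hk; norm_num at hk
  have hq : ∃ q : ℤ × ℤ, ¬ ∃ m n : ℤ, m * u.1 + n * v.1 = q.1 ∧ m * u.2 + n * v.2 = q.2 := by
    by_contra hcon
    push_neg at hcon
    obtain ⟨m1, n1, e1, e2⟩ := hcon (1, 0)
    obtain ⟨m2, n2, e3, e4⟩ := hcon (0, 1)
    norm_num at e1 e2 e3 e4
    have hdet : (m1 * n2 - m2 * n1) * k = 1 := by
      simp only [hkdef, det2]
      linear_combination (m2 * u.2 + n2 * v.2) * e1 + e4 - (m2 * u.1 + n2 * v.1) * e2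
    have hunit : IsUnit k :=
      IsUnit.of_mul_eq_one (m1 * n2 - m2 * n1) (by linarith [hdet, mul_comm (m1 * n2 - m2 * n1) k])
    rw [Int.isUnit_iff] at hunit
    rcases hunit with h | h <;> rw [h] at hk <;> norm_num at hk
  obtain ⟨q, hqL⟩ := hq
  obtain ⟨ε, hε1, hKk⟩ : ∃ ε : ℤ, (ε = 1 ∨ ε = -1) ∧ |k| = ε * k := by
    rcases le_or_gt 0 k with h | h
    · exact ⟨1, Or.inl rfl, by rw [abs_of_nonneg h]; ring⟩
    · exact ⟨-1, Or.inr rfl, by rw [abs_of_neg h]; ring⟩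
  set K := |k| with hKdef
  have hKpos : 0 < K := by linarith
  have cram1 : k * q.1 = det2 q v * u.1 + det2 u q * v.1 := by simp only [hkdef, det2]; ring
  have cram2 : k * q.2 = det2 q v * u.2 + det2 u q * v.2 := by simp only [hkdef, det2]; ring
  set A : ℤ := ε * det2 q v with hAdef
  set B : ℤ := ε * det2 u q with hBdef
  have hKq1 : K * q.1 = A * u.1 + B * v.1 := by
    rw [hKk, hAdef, hBdef]; linear_combination ε * cram1
  have hKq2 : K * q.2 = A * u.2 + B * v.2 := by
    rw [hKk, hAdef, hBdef]; linear_combination ε * cram2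
  set m1 := A / K with hm1
  set r1 := A % K with hr1
  set m2 := B / K with hm2
  set r2 := B % K with hr2
  have hA1 : K * m1 + r1 = A := Int.mul_ediv_add_emod A K
  have hB1 : K * m2 + r2 = B := Int.mul_ediv_add_emod B K
  have hr1nn : 0 ≤ r1 := Int.emod_nonneg A (ne_of_gt hKpos)
  have hr1lt : r1 < K := Int.emod_lt_of_pos A hKpos
  have hr2nn : 0 ≤ r2 := Int.emod_nonneg B (ne_of_gt hKpos)
  have hr2lt : r2 < K := Int.emod_lt_of_pos B hKpos
  obtain ⟨P1, P2, hP1, hP2⟩ : ∃ P1 P2 : ℤ,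
      P1 = q.1 - (m1 * u.1 + m2 * v.1) ∧ P2 = q.2 - (m1 * u.2 + m2 * v.2) := ⟨_, _, rfl, rfl⟩
  have hp01 : K * P1 = r1 * u.1 + r2 * v.1 := by
    linear_combination K * hP1 + hKq1 - u.1 * hA1 - v.1 * hB1
  have hp02 : K * P2 = r1 * u.2 + r2 * v.2 := by
    linear_combination K * hP2 + hKq2 - u.2 * hA1 - v.2 * hB1
  have hp0L : ∀ m n : ℤ, ¬(m * u.1 + n * v.1 = P1 ∧ m * u.2 + n * v.2 = P2) := by
    rintro m n ⟨h1, h2⟩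
    exact hqL ⟨m + m1, n + m2, by linear_combination h1 + hP1, by linear_combination h2 + hP2⟩
  have hKR : (0:ℝ) < (K : ℝ) := by exact_mod_cast hKpos
  have hKne : (K : ℝ) ≠ 0 := ne_of_gt hKR
  have e1 : (K:ℝ) * P1 = (r1:ℝ) * ((y.1:ℝ) - (x.1:ℝ)) + (r2:ℝ) * ((z.1:ℝ) - (x.1:ℝ)) := by
    have h := hp01; rw [hu1, hv1] at h; exact_mod_cast h
  have e2 : (K:ℝ) * P2 = (r1:ℝ) * ((y.2:ℝ) - (x.2:ℝ)) + (r2:ℝ) * ((z.2:ℝ) - (x.2:ℝ)) := by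
    have h := hp02; rw [hu2, hv2] at h; exact_mod_cast h
  rcases le_or_gt (r1 + r2) K with hcase | hcase
  · refine ⟨(x.1 + P1, x.2 + P2), ?_, ?_, ?_, ?_⟩
    · intro h
      rw [Prod.ext_iff] at h; simp only at h
      exact hp0L 0 0 ⟨by linarith [h.1], by linarith [h.2]⟩
    · intro h
      rw [Prod.ext_iff] at h; simp only at h
      exact hp0L 1 0 ⟨by rw [hu1]; linarith [h.1], by rw [hu2]; linarith [h.2]⟩
    · intro h
      rw [Prod.ext_iff] at h; simp only at h
      exact hp0L 0 1 ⟨by rw [hv1]; linarith [h.1], by rw [hv2]; linarith [h.2]⟩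
    · have hmem := combo_mem (toR x) (toR y) (toR z)
        (((K - r1 - r2 : ℤ) : ℝ) / K) (((r1 : ℤ) : ℝ) / K) (((r2 : ℤ) : ℝ) / K)
        (div_nonneg (by exact_mod_cast (by linarith : (0:ℤ) ≤ K - r1 - r2)) hKR.le)
        (div_nonneg (by exact_mod_cast hr1nn) hKR.le)
        (div_nonneg (by exact_mod_cast hr2nn) hKR.le)
        (by push_cast; field_simp; try ring)
      have heq : toR (x.1 + P1, x.2 + P2) =
          (((K - r1 - r2 : ℤ) : ℝ) / K) • toR x + (((r1 : ℤ) : ℝ) / K) • toR y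
          + (((r2 : ℤ) : ℝ) / K) • toR z := by
        simp only [toR, Prod.smul_mk, Prod.mk_add_mk, smul_eq_mul, Prod.mk.injEq]
        constructor
        · push_cast
          field_simp
          linear_combination e1
        · push_cast
          field_simp
          linear_combination e2
      rw [heq]; exact hmem
  · refine ⟨(x.1 + u.1 + v.1 - P1, x.2 + u.2 + v.2 - P2), ?_, ?_, ?_, ?_⟩
    · intro h
      rw [Prod.ext_iff] at h; simp only at h
      exact hp0L 1 1 ⟨by linarith [h.1], by linarith [h.2]⟩
    · intro h
      rw [Prod.ext_iff] at h; simp only at h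
      rw [hu1] at h
      exact hp0L 0 1 ⟨by rw [hv1]; linarith [h.1], by rw [hv2, hu2] at *; linarith [h.2]⟩
    · intro h
      rw [Prod.ext_iff] at h; simp only at h
      rw [hv1] at h
      exact hp0L 1 0 ⟨by rw [hu1]; linarith [h.1], by rw [hu2, hv2] at *; linarith [h.2]⟩
    · have hmem := combo_mem (toR x) (toR y) (toR z)
        (((r1 + r2 - K : ℤ) : ℝ) / K) (((K - r1 : ℤ) : ℝ) / K) (((K - r2 : ℤ) : ℝ) / K)
        (div_nonneg (by exact_mod_cast (by linarith : (0:ℤ) ≤ r1 + r2 - K)) hKR.le)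
        (div_nonneg (by exact_mod_cast (by linarith : (0:ℤ) ≤ K - r1)) hKR.le)
        (div_nonneg (by exact_mod_cast (by linarith : (0:ℤ) ≤ K - r2)) hKR.le)
        (by push_cast; field_simp; try ring)
      have heq : toR (x.1 + u.1 + v.1 - P1, x.2 + u.2 + v.2 - P2) =
          (((r1 + r2 - K : ℤ) : ℝ) / K) • toR x + (((K - r1 : ℤ) : ℝ) / K) • toR y
          + (((K - r2 : ℤ) : ℝ) / K) • toR z := by
        simp only [toR, Prod.smul_mk, Prod.mk_add_mk, smul_eq_mul, Prod.mk.injEq]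
        rw [hu1, hu2, hv1, hv2]
        constructor
        · push_cast
          field_simp
          linear_combination -e1
        · push_cast
          field_simp
          linear_combination -e2
      rw [heq]; exact hmem

lemma detR_cast (u w p : ℤ × ℤ) :
    ((det2 (u - p) (w - p) : ℤ) : ℝ) =
      ((toR u).1 - (toR p).1) * ((toR w).2 - (toR p).2) -
      ((toR u).2 - (toR p).2) * ((toR w).1 - (toR p).1) := by
  simp only [det2, toR, Prod.fst_sub, Prod.snd_sub]
  push_cast
  ring

lemma key (a b c d : ℤ × ℤ) (σ : ℤ) (hσ : σ = 1 ∨ σ = -1)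
    (hpts : ∀ p : ℤ × ℤ, toR p ∈ convexHull ℝ ({toR a, toR b, toR c} : Set (ℝ × ℝ)) →
      p = a ∨ p = b ∨ p = c ∨ p = d)
    (hk1 : 1 ≤ σ * det2 (b - d) (c - d))
    (hk2 : 1 ≤ σ * det2 (c - d) (a - d))
    (hk3 : 1 ≤ σ * det2 (a - d) (b - d))
    (hdin : toR d ∈ convexHull ℝ ({toR a, toR b, toR c} : Set (ℝ × ℝ))) :
    σ * det2 (b - d) (c - d) = 1 := by
  by_contra hne
  have h2 : 2 ≤ σ * det2 (b - d) (c - d) := by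
    rcases lt_or_eq_of_le hk1 with h | h
    · linarith
    · exact absurd h.symm hne
  have hle : σ * det2 (b - d) (c - d) ≤ |det2 (b - d) (c - d)| := by
    rcases hσ with rfl | rfl
    · simpa using le_abs_self (det2 (b - d) (c - d))
    · simpa using neg_le_abs (det2 (b - d) (c - d))
  obtain ⟨p, hpd, hpb, hpc, hmem⟩ := descent d b c (by linarith)
  have hsub : convexHull ℝ ({toR d, toR b, toR c} : Set (ℝ × ℝ)) ⊆
      convexHull ℝ ({toR a, toR b, toR c} : Set (ℝ × ℝ)) := by
    apply convexHull_min _ (convex_convexHull ℝ _)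
    intro w hw
    simp only [Set.mem_insert_iff, Set.mem_singleton_iff] at hw
    rcases hw with rfl | rfl | rfl
    · exact hdin
    · exact subset_convexHull ℝ _ (by simp)
    · exact subset_convexHull ℝ _ (by simp)
  have hpa : p = a := by
    rcases hpts p (hsub hmem) with h | h | h | h
    · exact h
    · exact absurd h hpb
    · exact absurd h hpc
    · exact absurd h hpd
  subst hpa
  -- weights of a in triangle (d, b, c) are σ-nonnegative
  have hσR : (0:ℝ) < (σ : ℝ) * (σ : ℝ) := by rcases hσ with rfl | rfl <;> norm_num
  -- second weight (vertex order b, c, d)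
  have hcyc1 : det2 (c - b) (d - b) = det2 (b - d) (c - d) := by
    simp only [det2, Prod.fst_sub, Prod.snd_sub]; ring
  have hmem2 : toR p ∈ convexHull ℝ ({toR b, toR c, toR d} : Set (ℝ × ℝ)) := by
    rw [← tri_rot]; exact hmem
  have w2 := hull_halfplane (toR b) (toR c) (toR d) (σ : ℝ)
    (by rw [← detR_cast]; rw [hcyc1]
        have : (1:ℝ) ≤ (σ : ℝ) * ((det2 (b - d) (c - d) : ℤ) : ℝ) := by exact_mod_cast hk1
        linarith)
    (toR p) hmem2
  rw [← detR_cast] at w2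
  have hm2 : 0 ≤ σ * det2 (c - p) (d - p) := by exact_mod_cast w2
  -- third weight (vertex order c, d, b)
  have hcyc2 : det2 (d - c) (b - c) = det2 (b - d) (c - d) := by
    simp only [det2, Prod.fst_sub, Prod.snd_sub]; ring
  have hmem3 : toR p ∈ convexHull ℝ ({toR c, toR d, toR b} : Set (ℝ × ℝ)) := by
    rw [← tri_rot, ← tri_rot]; exact hmem
  have w3 := hull_halfplane (toR c) (toR d) (toR b) (σ : ℝ)
    (by rw [← detR_cast]; rw [hcyc2]
        have : (1:ℝ) ≤ (σ : ℝ) * ((det2 (b - d) (c - d) : ℤ) : ℝ) := by exact_mod_cast hk1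
        linarith)
    (toR p) hmem3
  rw [← detR_cast] at w3
  have hm3 : 0 ≤ σ * det2 (d - p) (b - p) := by exact_mod_cast w3
  -- sum identities
  have sum1 : det2 (b - p) (c - p) = det2 (b - d) (c - d) + det2 (c - d) (p - d)
      + det2 (p - d) (b - d) := by
    simp only [det2, Prod.fst_sub, Prod.snd_sub]; ring
  have sum2 : det2 (b - p) (c - p) + det2 (c - p) (d - p) + det2 (d - p) (b - p)
      = det2 (b - d) (c - d) := by
    simp only [det2, Prod.fst_sub, Prod.snd_sub]; ring
  -- contradiction
  have hσD : σ * det2 (b - p) (c - p) = σ * det2 (b - d) (c - d)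
      + σ * det2 (c - d) (p - d) + σ * det2 (p - d) (b - d) := by
    linear_combination σ * sum1
  have hσD2 : σ * det2 (b - p) (c - p) + σ * det2 (c - p) (d - p)
      + σ * det2 (d - p) (b - p) = σ * det2 (b - d) (c - d) := by
    linear_combination σ * sum2
  linarith [hk2, hk3, hm2, hm3]

theorem stmt5 (T : Set (ℤ × ℤ)) (a b c d : ℤ × ℤ)
    (hnc : det2 (b - a) (c - a) ≠ 0) (hT : T = triPts a b c)
    (hT4 : T = {a, b, c, d}) (hcard : T.ncard = 4)
    (hd : toR d ∈ interior (convexHull ℝ {toR a, toR b, toR c})) :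
    (3 : ℤ) • d = a + b + c := by
  obtain ⟨σ, hσ, hσD⟩ : ∃ σ : ℤ, (σ = 1 ∨ σ = -1) ∧ 1 ≤ σ * det2 (b - a) (c - a) := by
    rcases lt_or_gt_of_ne hnc with h | h
    · exact ⟨-1, Or.inr rfl, by linarith⟩
    · exact ⟨1, Or.inl rfl, by linarith⟩
  have hσR : ((σ : ℤ) : ℝ) * ((σ : ℤ) : ℝ) = 1 := by
    rcases hσ with rfl | rfl <;> norm_num
  have hpts : ∀ p : ℤ × ℤ, toR p ∈ convexHull ℝ ({toR a, toR b, toR c} : Set (ℝ × ℝ)) →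
      p = a ∨ p = b ∨ p = c ∨ p = d := by
    intro p hp
    have hpT : p ∈ T := by rw [hT]; exact hp
    rw [hT4] at hpT
    simpa using hpT
  -- positivity of the three subtriangle determinants
  have castle : ∀ X : ℤ, (1:ℝ) ≤ (σ:ℝ) * (X:ℝ) → 1 ≤ σ * X := by
    intro X h; exact_mod_cast h
  have castlt : ∀ X : ℤ, (0:ℝ) < (σ:ℝ) * (X:ℝ) → 1 ≤ σ * X := by
    intro X h
    have : 0 < σ * X := by exact_mod_cast h
    linarith
  have hk1 : 1 ≤ σ * det2 (b - d) (c - d) := by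
    apply castlt
    have := interior_pos (toR a) (toR b) (toR c) (σ:ℝ) hσR
      (by rw [← detR_cast]
          have : (1:ℝ) ≤ (σ:ℝ) * ((det2 (b - a) (c - a) : ℤ) : ℝ) := by exact_mod_cast hσD
          linarith)
      (toR d) hd
    rw [← detR_cast] at this
    exact this
  have hcyc1 : det2 (c - b) (a - b) = det2 (b - a) (c - a) := by
    simp only [det2, Prod.fst_sub, Prod.snd_sub]; ring
  have hd2 : toR d ∈ interior (convexHull ℝ ({toR b, toR c, toR a} : Set (ℝ × ℝ))) := by
    rw [← tri_rot]; exact hd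
  have hk2 : 1 ≤ σ * det2 (c - d) (a - d) := by
    apply castlt
    have := interior_pos (toR b) (toR c) (toR a) (σ:ℝ) hσR
      (by rw [← detR_cast, hcyc1]
          have : (1:ℝ) ≤ (σ:ℝ) * ((det2 (b - a) (c - a) : ℤ) : ℝ) := by exact_mod_cast hσD
          linarith)
      (toR d) hd2
    rw [← detR_cast] at this
    exact this
  have hcyc2 : det2 (a - c) (b - c) = det2 (b - a) (c - a) := by
    simp only [det2, Prod.fst_sub, Prod.snd_sub]; ring
  have hd3 : toR d ∈ interior (convexHull ℝ ({toR c, toR a, toR b} : Set (ℝ × ℝ))) := by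
    rw [← tri_rot, ← tri_rot]; exact hd
  have hk3 : 1 ≤ σ * det2 (a - d) (b - d) := by
    apply castlt
    have := interior_pos (toR c) (toR a) (toR b) (σ:ℝ) hσR
      (by rw [← detR_cast, hcyc2]
          have : (1:ℝ) ≤ (σ:ℝ) * ((det2 (b - a) (c - a) : ℤ) : ℝ) := by exact_mod_cast hσD
          linarith)
      (toR d) hd3
    rw [← detR_cast] at this
    exact this
  have hdhull : toR d ∈ convexHull ℝ ({toR a, toR b, toR c} : Set (ℝ × ℝ)) :=
    interior_subset hd
  -- the three unimodularity statements
  have hK1 : σ * det2 (b - d) (c - d) = 1 := key a b c d σ hσ hpts hk1 hk2 hk3 hdhull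
  have hpts2 : ∀ p : ℤ × ℤ, toR p ∈ convexHull ℝ ({toR b, toR c, toR a} : Set (ℝ × ℝ)) →
      p = b ∨ p = c ∨ p = a ∨ p = d := by
    intro p hp; rw [← tri_rot] at hp; rcases hpts p hp with h | h | h | h <;> tauto
  have hK2 : σ * det2 (c - d) (a - d) =
      1 := key b c a d σ hσ hpts2 hk2 hk3 hk1 (by rw [← tri_rot]; exact hdhull)
  have hpts3 : ∀ p : ℤ × ℤ, toR p ∈ convexHull ℝ ({toR c, toR a, toR b} : Set (ℝ × ℝ)) →
      p = c ∨ p = a ∨ p = b ∨ p = d := by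
    intro p hp; rw [← tri_rot, ← tri_rot] at hp; rcases hpts p hp with h | h | h | h <;> tauto
  have hK3 : σ * det2 (a - d) (b - d) =
      1 := key c a b d σ hσ hpts3 hk3 hk1 hk2 (by rw [← tri_rot, ← tri_rot]; exact hdhull)
  -- hence all three determinants are equal (and nonzero)
  have hE1 : det2 (b - d) (c - d) = det2 (c - d) (a - d) := by
    rcases hσ with rfl | rfl <;> linarith
  have hE2 : det2 (c - d) (a - d) = det2 (a - d) (b - d) := by
    rcases hσ with rfl | rfl <;> linarith
  have hk3ne : det2 (a - d) (b - d) ≠ 0 := by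
    intro h; rw [h] at hK3; simp at hK3
  simp only [det2, Prod.fst_sub, Prod.snd_sub] at hE1 hE2 hk3ne
  have hA : (a.1 - d.1) * (a.2 + b.2 + c.2 - 3 * d.2)
      - (a.2 - d.2) * (a.1 + b.1 + c.1 - 3 * d.1) = 0 := by linear_combination -hE2
  have hB : (b.1 - d.1) * (a.2 + b.2 + c.2 - 3 * d.2)
      - (b.2 - d.2) * (a.1 + b.1 + c.1 - 3 * d.1) = 0 := by linear_combination hE1 + hE2
  have h1 : ((a.1 - d.1) * (b.2 - d.2) - (a.2 - d.2) * (b.1 - d.1))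
      * (a.1 + b.1 + c.1 - 3 * d.1) = 0 := by
    linear_combination (b.1 - d.1) * hA - (a.1 - d.1) * hB
  have h2 : ((a.1 - d.1) * (b.2 - d.2) - (a.2 - d.2) * (b.1 - d.1))
      * (a.2 + b.2 + c.2 - 3 * d.2) = 0 := by
    linear_combination (b.2 - d.2) * hA - (a.2 - d.2) * hB
  have hs1 : a.1 + b.1 + c.1 - 3 * d.1 = 0 := by
    rcases mul_eq_zero.1 h1 with h | h
    · exact absurd h hk3ne
    · exact h
  have hs2 : a.2 + b.2 + c.2 - 3 * d.2 = 0 := by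
    rcases mul_eq_zero.1 h2 with h | h
    · exact absurd h hk3ne
    · exact h
  apply Prod.ext
  · simp only [Prod.smul_fst, Prod.fst_add, smul_eq_mul]
    linarith
  · simp only [Prod.smul_snd, Prod.snd_add, smul_eq_mul]
    linarith
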